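/- Let A be a commutative ring and let a, b ∈ A be such that a is a nonzerodivisor in A and the image of b is a nonzerodivisor in A/(a) (i.e., (a, b) is a regular sequence on A). Let M be an A-module admitting a short exact sequence 0 → F₁ → F₂ → M → 0 of A-modules with F₁ and F₂ finite free, and suppose that a·M = 0. Then b acts as a nonzerodivisor on M: every m ∈ M with b·m = 0 is zero. -/

import Mathlib

/-!
STATEMENT 6: Let `A` be a commutative ring and `a b : A` with `a` a nonzerodivisor in `A` and
the image of `b` a nonzerodivisor in `A/(a)`.  Let `M` be an `A`-module admitting a short exact
sequence `0 → F₁ → F₂ → M → 0` with `F₁, F₂` finite free, and suppose `a • M = 0`.  Then `b`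
acts as a nonzerodivisor on `M`.
-/

theorem statement6 (A : Type) [CommRing A] (a b : A)
    (ha : a ∈ nonZeroDivisors A)
    (hb : Ideal.Quotient.mk (Ideal.span {a}) b ∈ nonZeroDivisors (A ⧸ Ideal.span {a}))
    (M : Type) [AddCommGroup M] [Module A M]
    (n₁ n₂ : ℕ)
    (f : (Fin n₁ → A) →ₗ[A] (Fin n₂ → A)) (g : (Fin n₂ → A) →ₗ[A] M)
    (hf : Function.Injective f) (hg : Function.Surjective g)
    (hfg : LinearMap.ker g = LinearMap.range f)
    (haM : ∀ m : M, a • m = 0) :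
    ∀ m : M, b • m = 0 → m = 0 := by
  intro m hm
  obtain ⟨x, rfl⟩ := hg m
  have hax : a • x ∈ LinearMap.range f := by
    rw [← hfg, LinearMap.mem_ker, map_smul]; exact haM _
  have hbx : b • x ∈ LinearMap.range f := by
    rw [← hfg, LinearMap.mem_ker, map_smul]; exact hm
  obtain ⟨z, hz⟩ := hax
  obtain ⟨y, hy⟩ := hbx
  have key : a • y = b • z := by
    apply hf
    rw [map_smul, map_smul, hz, hy, smul_comm]
  have hw : ∀ i, ∃ w, z i = a * w := by
    intro i
    have hz0 : (Ideal.Quotient.mk (Ideal.span {a})) (z i) = 0 := by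
      have hbz : b * z i = a * y i := by
        have := congrFun key i
        simpa [Pi.smul_apply, smul_eq_mul] using this.symm
      apply hb.2
      rw [← map_mul, mul_comm, hbz, map_mul,
        Ideal.Quotient.eq_zero_iff_mem.mpr (Ideal.mem_span_singleton_self a), zero_mul]
    exact Ideal.mem_span_singleton'.mp (Ideal.Quotient.eq_zero_iff_mem.mp hz0)
      |>.imp fun w h => by rw [← h, mul_comm]
  choose w hwz using hw
  have hzw : z = a • w := by
    funext i; simpa [Pi.smul_apply, smul_eq_mul] using hwz i
  have hx : x = f w := by
    funext i
    have h1 : a * x i = a * f w i := by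
      have := congrFun hz i
      rw [hzw, map_smul] at this
      simpa [Pi.smul_apply, smul_eq_mul] using this.symm
    have := ha.2 (x i - f w i) (by rw [sub_mul, mul_comm (x i), mul_comm (f w i), h1, sub_self])
    exact sub_eq_zero.mp this
  rw [hx]
  have : f w ∈ LinearMap.ker g := by rw [hfg]; exact ⟨w, rfl⟩
  exact this
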